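/- arXiv:2204.01908 — 3 statements merged into one kernel-verified Lean document; each statement's English description precedes it below -/
import Mathlib

section
/- In the distance-restricted firefighter game with parameter d = 2 on the half grid (vertex set ℤ×ℕ with square-grid adjacency), two firefighters can contain any fire whose initial set of burning vertices is finite. -/
/- Distance-restricted firefighter game (Burgess, Marcoux, Pike, arXiv:2204.01908).

At time 0 a fire breaks out at the set `F` of vertices and each firefighter is placed on
(protects) a vertex not in `F`.  At each subsequent time step the fire spreads to every
unburnt, unprotected neighbour of a burning vertex, and then each firefighter moves to a
vertex at distance at most `d` from its current vertex in the subgraph induced by the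
unburnt vertices (i.e. along a walk of length ≤ `d` through unburnt vertices).
Occupied vertices are protected forever.  The fire is contained if the burnt set
stabilizes after finitely many steps. -/

namespace Firefight

variable {V : Type*}

/-- There is a walk in `G` from `u` to `v` of length at most `d` all of whose vertices
(including the endpoints) lie in `S`. -/
def ReachWithin (G : SimpleGraph V) (S : Set V) (d : ℕ) (u v : V) : Prop :=
  ∃ p : G.Walk u v, p.length ≤ d ∧ ∀ x ∈ p.support, x ∈ S

/-- The set of burnt vertices at each time: `F` is the set initially on fire, and
`prot t` is the set of vertices that are protected when the fire spreads at step `t+1`. -/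
def burnt (G : SimpleGraph V) (F : Set V) (prot : ℕ → Set V) : ℕ → Set V
  | 0 => F
  | t + 1 => burnt G F prot t ∪ {v | v ∉ prot t ∧ ∃ w ∈ burnt G F prot t, G.Adj w v}

/-- The set of vertices protected by time `t`: all vertices occupied by some firefighter
at some time `s ≤ t`, where `pos s i` is the vertex occupied by firefighter `i` at time `s`. -/
def protOf {k : ℕ} (pos : ℕ → Fin k → V) (t : ℕ) : Set V :=
  {v | ∃ s ≤ t, ∃ i, pos s i = v}

/-- `k` firefighters, each moving distance at most `d` per turn within the unburnt subgraph,
can contain a fire starting at `F`, the burnt set stabilizing by time `T`. -/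
def CanContainIn (G : SimpleGraph V) (d k : ℕ) (F : Set V) (T : ℕ) : Prop :=
  ∃ pos : ℕ → Fin k → V,
    (∀ i, pos 0 i ∉ F) ∧
    (∀ t i, ReachWithin G (burnt G F (protOf pos) (t + 1))ᶜ d (pos t i) (pos (t + 1) i)) ∧
    ∀ t, burnt G F (protOf pos) t ⊆ burnt G F (protOf pos) T

/-- `k` firefighters, each moving distance at most `d` per turn within the unburnt subgraph,
can contain a fire starting at `F`. -/
def CanContain (G : SimpleGraph V) (d k : ℕ) (F : Set V) : Prop :=
  ∃ T, CanContainIn G d k F T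

/-- The distance-restricted firefighter number `f_d(G,u)`: the least number of firefighters
that can contain a fire starting at `u` in the distance-`d` game. -/
noncomputable def fdNum (G : SimpleGraph V) (d : ℕ) (u : V) : ℕ :=
  sInf {k | CanContain G d k {u}}

/-- The half grid: vertex set `ℤ × ℕ` with square-grid adjacency. -/
def halfGrid : SimpleGraph (ℤ × ℕ) :=
  SimpleGraph.fromRel (fun p q => |p.1 - q.1| + |(p.2 : ℤ) - (q.2 : ℤ)| = 1)

/-! ### Auxiliary material for the proof -/

lemma adj_iff {p q : ℤ × ℕ} : halfGrid.Adj p q ↔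
    ((p.1 = q.1 ∧ (p.2 = q.2 + 1 ∨ q.2 = p.2 + 1)) ∨
     (p.2 = q.2 ∧ (p.1 = q.1 + 1 ∨ q.1 = p.1 + 1))) := by
  rw [halfGrid, SimpleGraph.fromRel_adj]
  constructor
  · rintro ⟨hne, h | h⟩
    · rcases abs_cases (p.1 - q.1) with ⟨h1, _⟩ | ⟨h1, _⟩ <;>
      rcases abs_cases ((p.2 : ℤ) - (q.2 : ℤ)) with ⟨h2, _⟩ | ⟨h2, _⟩ <;>
      rw [h1, h2] at h <;> omega
    · rw [abs_sub_comm q.1 p.1, abs_sub_comm (q.2 : ℤ) (p.2 : ℤ)] at h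
      rcases abs_cases (p.1 - q.1) with ⟨h1, _⟩ | ⟨h1, _⟩ <;>
      rcases abs_cases ((p.2 : ℤ) - (q.2 : ℤ)) with ⟨h2, _⟩ | ⟨h2, _⟩ <;>
      rw [h1, h2] at h <;> omega
  · intro h
    have hne : p ≠ q := by
      rintro rfl
      omega
    refine ⟨hne, Or.inl ?_⟩
    rcases abs_cases (p.1 - q.1) with ⟨h1, _⟩ | ⟨h1, _⟩ <;>
    rcases abs_cases ((p.2 : ℤ) - (q.2 : ℤ)) with ⟨h2, _⟩ | ⟨h2, _⟩ <;>
    rw [h1, h2] <;> omega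

/-- The wall path: up the column `x = 8m` to height `14m`, left along the row `y = 14m`
to `x = -40m`, then down to the ground. -/
def wSeg (m ℓ : ℕ) : ℤ × ℕ :=
  if ℓ ≤ 14*m then ((8*m : ℤ), ℓ)
  else if ℓ ≤ 62*m then ((8*m : ℤ) - ((ℓ - 14*m : ℕ) : ℤ), 14*m)
  else ((-(40*m : ℤ)), 76*m - ℓ)

/-- Distance from the initial `m`-box. -/
def Dm (m : ℕ) (p : ℤ × ℕ) : ℕ := (p.1.natAbs - m) + (p.2 - m)

/-- Every wall cell is strictly further from the fire (in time) than the time at which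
it is protected. -/
lemma key_D (m : ℕ) (hm : 1 ≤ m) : ∀ ℓ ≤ 76*m, ℓ + 1 ≤ 2 * Dm m (wSeg m ℓ) := by
  intro ℓ hℓ
  unfold wSeg Dm
  split_ifs with h1 h2 <;> dsimp only <;> omega

lemma adj_w (m : ℕ) (hm : 1 ≤ m) : ∀ ℓ < 76*m, halfGrid.Adj (wSeg m ℓ) (wSeg m (ℓ+1)) := by
  intro ℓ hℓ
  rw [adj_iff]
  unfold wSeg
  split_ifs <;> dsimp only <;> omega

/-- The two firefighters' positions: firefighter `i` stands on wall cell `2t+i` at time `t`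
(clamped at the end of the wall). -/
def posm (m : ℕ) : ℕ → Fin 2 → ℤ × ℕ := fun t i => wSeg m (min (2*t + (i : ℕ)) (76*m))

lemma mem_prot (m t ℓ : ℕ) (hℓ : ℓ ≤ 76*m) (h : ℓ ≤ 2*t+1) :
    wSeg m ℓ ∈ protOf (posm m) t := by
  refine ⟨ℓ/2, by omega, ⟨ℓ % 2, by omega⟩, ?_⟩
  simp only [posm]
  congr 1
  omega

/-- The fire spreads at speed at most 1 (regardless of the protection strategy). -/
lemma fire_bound (m : ℕ) (F : Set (ℤ × ℕ)) (hF : ∀ p ∈ F, Dm m p = 0)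
    (pr : ℕ → Set (ℤ × ℕ)) :
    ∀ t, ∀ p ∈ burnt halfGrid F pr t, Dm m p ≤ t := by
  intro t
  induction t with
  | zero => intro p hp; exact le_of_eq (hF p hp)
  | succ t ih =>
    intro p hp
    rcases (show p ∈ burnt halfGrid F pr t ∪
        {v | v ∉ pr t ∧ ∃ w ∈ burnt halfGrid F pr t, halfGrid.Adj w v} from hp) with
      h | ⟨-, w, hw, hadj⟩
    · exact (ih p h).trans (by omega)
    · have hDw := ih w hw
      rcases adj_iff.mp hadj with ⟨e1, e2 | e2⟩ | ⟨e1, e2 | e2⟩ <;>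
      · unfold Dm at *
        omega

/-- The wall is always protected before the fire can reach it, hence never burns. -/
lemma wall_unburnt (m : ℕ) (hm : 1 ≤ m) (F : Set (ℤ × ℕ)) (hF0 : ∀ p ∈ F, Dm m p = 0) :
    ∀ t, ∀ ℓ ≤ 76*m, wSeg m ℓ ∉ burnt halfGrid F (protOf (posm m)) t := by
  intro t
  induction t with
  | zero =>
    intro ℓ hℓ h
    have h1 := hF0 _ h
    have h2 := key_D m hm ℓ hℓ
    omega
  | succ t ih =>
    intro ℓ hℓ h
    rcases (show wSeg m ℓ ∈ burnt halfGrid F (protOf (posm m)) t ∪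
        {v | v ∉ protOf (posm m) t ∧
          ∃ w ∈ burnt halfGrid F (protOf (posm m)) t, halfGrid.Adj w v} from h) with
      h' | ⟨hprot, w, hw, hadj⟩
    · exact ih ℓ hℓ h'
    · have hD : Dm m (wSeg m ℓ) ≤ t + 1 := fire_bound m F hF0 _ (t+1) _ h
      have hk := key_D m hm ℓ hℓ
      exact hprot (mem_prot m t ℓ hℓ (by omega))

/-- The region enclosed by the wall and the ground. -/
def Iset (m : ℕ) : Set (ℤ × ℕ) := {p | -(40*m : ℤ) < p.1 ∧ p.1 < 8*m ∧ p.2 < 14*m}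

lemma Iset_finite (m : ℕ) : (Iset m).Finite := by
  apply Set.Finite.subset (Set.Finite.prod (Set.finite_Icc (-(40*m : ℤ)) (8*m))
    (Set.finite_Icc 0 (14*m)))
  rintro ⟨a, b⟩ ⟨h1, h2, h3⟩
  constructor <;> simp only [Set.mem_Icc] <;> omega

/-- Any neighbour of the enclosed region is in the region or on the wall. -/
lemma closure (m : ℕ) (hm : 1 ≤ m) {w v : ℤ × ℕ} (hw : w ∈ Iset m)
    (hadj : halfGrid.Adj w v) :
    v ∈ Iset m ∨ ∃ ℓ ≤ 76*m, wSeg m ℓ = v := by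
  obtain ⟨hw1, hw2, hw3⟩ := hw
  have hc := adj_iff.mp hadj
  by_cases h1 : v.1 = 8*m
  · right
    have hv2 : v.2 ≤ 14*m := by
      rcases hc with ⟨e1, e2 | e2⟩ | ⟨e1, e2 | e2⟩ <;> omega
    refine ⟨v.2, by omega, ?_⟩
    simp only [wSeg, if_pos hv2]
    rw [Prod.ext_iff]
    exact ⟨by omega, rfl⟩
  · by_cases h2 : v.1 = -(40*m : ℤ)
    · right
      have hv2 : v.2 < 14*m := by
        rcases hc with ⟨e1, e2 | e2⟩ | ⟨e1, e2 | e2⟩ <;> omega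
      refine ⟨76*m - v.2, by omega, ?_⟩
      simp only [wSeg, if_neg (by omega : ¬ (76*m - v.2 ≤ 14*m)),
        if_neg (by omega : ¬ (76*m - v.2 ≤ 62*m))]
      rw [Prod.ext_iff]
      exact ⟨by omega, by omega⟩
    · by_cases h3 : v.2 = 14*m
      · right
        have hv1 : -(40*m : ℤ) < v.1 ∧ v.1 < 8*m := by
          rcases hc with ⟨e1, e2 | e2⟩ | ⟨e1, e2 | e2⟩ <;> omega
        refine ⟨14*m + (8*m - v.1).toNat, by omega, ?_⟩
        simp only [wSeg, if_neg (by omega : ¬ (14*m + (8*m - v.1).toNat ≤ 14*m)),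
          if_pos (by omega : 14*m + (8*m - v.1).toNat ≤ 62*m)]
        rw [Prod.ext_iff]
        exact ⟨by omega, by omega⟩
      · left
        refine ⟨?_, ?_, ?_⟩ <;> rcases hc with ⟨e1, e2 | e2⟩ | ⟨e1, e2 | e2⟩ <;> omega

/-- The fire stays in the enclosed region forever. -/
lemma burnt_sub_I (m : ℕ) (hm : 1 ≤ m) (F : Set (ℤ × ℕ)) (hF0 : ∀ p ∈ F, Dm m p = 0)
    (hFI : F ⊆ Iset m) :
    ∀ t, burnt halfGrid F (protOf (posm m)) t ⊆ Iset m := by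
  intro t
  induction t with
  | zero => exact hFI
  | succ t ih =>
    intro v hv
    rcases (show v ∈ burnt halfGrid F (protOf (posm m)) t ∪
        {v | v ∉ protOf (posm m) t ∧
          ∃ w ∈ burnt halfGrid F (protOf (posm m)) t, halfGrid.Adj w v} from hv) with
      h | ⟨hp, w, hw, hadj⟩
    · exact ih h
    · rcases closure m hm (ih hw) hadj with h | ⟨ℓ, hℓ, rfl⟩
      · exact h
      · exact absurd hv (wall_unburnt m hm F hF0 (t+1) ℓ hℓ)

lemma burnt_mono (G : SimpleGraph V) (F : Set V) (pr : ℕ → Set V) :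
    Monotone (burnt G F pr) := by
  apply monotone_nat_of_le_succ
  intro t
  exact Set.subset_union_left

lemma protOf_mono {k : ℕ} (pos : ℕ → Fin k → V) {s t : ℕ} (h : s ≤ t) :
    protOf pos s ⊆ protOf pos t := by
  rintro v ⟨s', hs', i, rfl⟩
  exact ⟨s', hs'.trans h, i, rfl⟩

/-- Once the burnt set is constant for one step, it is constant forever. -/
lemma burnt_fix (G : SimpleGraph V) (F : Set V) {k : ℕ} (pos : ℕ → Fin k → V) (t : ℕ)
    (h : burnt G F (protOf pos) (t+1) = burnt G F (protOf pos) t) :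
    ∀ u, burnt G F (protOf pos) (t+u) = burnt G F (protOf pos) t := by
  intro u
  induction u with
  | zero => rfl
  | succ u ih =>
    apply subset_antisymm
    · intro v hv
      rcases (show v ∈ burnt G F (protOf pos) (t+u) ∪
          {v | v ∉ protOf pos (t+u) ∧
            ∃ w ∈ burnt G F (protOf pos) (t+u), G.Adj w v} from hv) with
        hv' | ⟨hp, w, hw, hadj⟩
      · exact ih ▸ hv'
      · have hp' : v ∉ protOf pos t := fun hh => hp (protOf_mono pos (by omega) hh)
        have hw' : w ∈ burnt G F (protOf pos) t := ih ▸ hw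
        have : v ∈ burnt G F (protOf pos) (t+1) := Or.inr ⟨hp', w, hw', hadj⟩
        rwa [h] at this
    · rw [← ih]
      exact burnt_mono G F (protOf pos) (by omega)

lemma reach_two {G : SimpleGraph V} {S : Set V} {a b c : V}
    (hab : a = b ∨ G.Adj a b) (hbc : b = c ∨ G.Adj b c)
    (ha : a ∈ S) (hb : b ∈ S) (hc : c ∈ S) : ReachWithin G S 2 a c := by
  rcases hab with rfl | hab
  · rcases hbc with rfl | hbc
    · exact ⟨.nil, by simp, by intro x hx; simp at hx; subst hx; exact ha⟩
    · refine ⟨.cons hbc .nil, by simp, ?_⟩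
      intro x hx
      simp [SimpleGraph.Walk.support_cons] at hx
      rcases hx with rfl | rfl
      exacts [ha, hc]
  · rcases hbc with rfl | hbc
    · refine ⟨.cons hab .nil, by simp, ?_⟩
      intro x hx
      simp [SimpleGraph.Walk.support_cons] at hx
      rcases hx with rfl | rfl
      exacts [ha, hc]
    · refine ⟨.cons hab (.cons hbc .nil), by simp, ?_⟩
      intro x hx
      simp [SimpleGraph.Walk.support_cons] at hx
      rcases hx with rfl | rfl | rfl
      exacts [ha, hb, hc]

/-- In the distance-restricted game with `d = 2` on the half grid, two firefighters can
contain any fire whose initial set of burning vertices is finite. -/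
theorem half_grid_d2_finite_fire :
    ∀ F : Set (ℤ × ℕ), F.Finite → CanContain halfGrid 2 2 F := by
  intro F hFfin
  obtain ⟨m0, hm0⟩ := (hFfin.image (fun p => max p.1.natAbs p.2)).bddAbove
  set m := m0 + 1 with hm_def
  have hm : 1 ≤ m := by omega
  have hbox : ∀ p ∈ F, p.1.natAbs ≤ m0 ∧ p.2 ≤ m0 := by
    intro p hp
    have h := max_le_iff.mp (hm0 (Set.mem_image_of_mem _ hp))
    exact h
  have hF0 : ∀ p ∈ F, Dm m p = 0 := by
    intro p hp
    have := hbox p hp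
    unfold Dm
    omega
  have hFI : F ⊆ Iset m := by
    intro p hp
    have := hbox p hp
    refine ⟨?_, ?_, ?_⟩ <;> omega
  have hmoves : ∀ t (i : Fin 2),
      ReachWithin halfGrid (burnt halfGrid F (protOf (posm m)) (t+1))ᶜ 2
        (posm m t i) (posm m (t+1) i) := by
    intro t i
    have hwc : ∀ ℓ : ℕ, wSeg m (min ℓ (76*m)) = wSeg m (min (ℓ+1) (76*m)) ∨
        halfGrid.Adj (wSeg m (min ℓ (76*m))) (wSeg m (min (ℓ+1) (76*m))) := by
      intro ℓ
      rcases lt_or_ge ℓ (76*m) with h | h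
      · right
        rw [min_eq_left (by omega), min_eq_left (by omega)]
        exact adj_w m hm ℓ h
      · left
        rw [min_eq_right (by omega), min_eq_right (by omega)]
    have hmem : ∀ ℓ : ℕ,
        wSeg m (min ℓ (76*m)) ∈ (burnt halfGrid F (protOf (posm m)) (t+1))ᶜ :=
      fun ℓ => wall_unburnt m hm F hF0 (t+1) _ (min_le_right _ _)
    simp only [posm]
    rw [show 2*(t+1) + (i : ℕ) = (2*t + (i : ℕ) + 1) + 1 from by ring]
    exact reach_two (hwc _) (hwc _) (hmem _) (hmem _) (hmem _)
  have hinit : ∀ i : Fin 2, posm m 0 i ∉ F := by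
    intro i hmem
    have hi : (i : ℕ) ≤ 1 := by omega
    have h0 := hF0 _ hmem
    simp only [posm] at h0
    rw [min_eq_left (by omega)] at h0
    unfold wSeg at h0
    rw [if_pos (by omega)] at h0
    unfold Dm at h0
    dsimp only at h0
    omega
  have hsub := burnt_sub_I m hm F hF0 hFI
  have hIfin := Iset_finite m
  have hbfin : ∀ t, (burnt halfGrid F (protOf (posm m)) t).Finite :=
    fun t => hIfin.subset (hsub t)
  have hex : ∃ T, burnt halfGrid F (protOf (posm m)) (T+1)
      = burnt halfGrid F (protOf (posm m)) T := by
    by_contra hcon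
    push_neg at hcon
    have hgrow : ∀ t, t ≤ (burnt halfGrid F (protOf (posm m)) t).ncard := by
      intro t
      induction t with
      | zero => omega
      | succ t ih =>
        have hss : burnt halfGrid F (protOf (posm m)) t
            ⊂ burnt halfGrid F (protOf (posm m)) (t+1) :=
          Set.ssubset_iff_subset_ne.mpr
            ⟨burnt_mono _ _ _ (Nat.le_succ t), fun h => hcon t h.symm⟩
        have := Set.ncard_lt_ncard hss (hbfin (t+1))
        omega
    have h1 := Set.ncard_le_ncard (hsub ((Iset m).ncard + 1)) hIfin
    have h2 := hgrow ((Iset m).ncard + 1)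
    omega
  obtain ⟨T, hT⟩ := hex
  refine ⟨T, posm m, hinit, hmoves, ?_⟩
  intro t
  rcases le_or_gt t T with h | h
  · exact burnt_mono _ _ _ h
  · have hfix := burnt_fix halfGrid F (posm m) T hT (t - T)
    rw [show T + (t - T) = t from by omega] at hfix
    rw [hfix]

end Firefight
end

section
/- In the distance-restricted firefighter game with parameter d = 1 on the infinite hexagonal grid, three firefighters are necessary and sufficient to contain the fire; that is, f_1(G_hex) = 3. -/
/- Distance-restricted firefighter game (Burgess, Marcoux, Pike, arXiv:2204.01908).

At time 0 a fire breaks out at the set `F` of vertices and each firefighter is placed on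
(protects) a vertex not in `F`.  At each subsequent time step the fire spreads to every
unburnt, unprotected neighbour of a burning vertex, and then each firefighter moves to a
vertex at distance at most `d` from its current vertex in the subgraph induced by the
unburnt vertices (i.e. along a walk of length ≤ `d` through unburnt vertices).
Occupied vertices are protected forever.  The fire is contained if the burnt set
stabilizes after finitely many steps. -/

namespace Firefight

variable {V : Type*}

/-- The infinite hexagonal grid: vertex set `ℤ × ℤ`, with `(x,y)` adjacent to `(x±1,y)`
for all `x, y`, and `(x,y)` adjacent to `(x,y+1)` exactly when `x + y` is even. -/
def hexGrid : SimpleGraph (ℤ × ℤ) :=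
  SimpleGraph.fromRel (fun p q =>
    (p.2 = q.2 ∧ |p.1 - q.1| = 1) ∨ (p.1 = q.1 ∧ Even (p.1 + p.2) ∧ q.2 = p.2 + 1))

open SimpleGraph

lemma adj_right (x y : ℤ) : hexGrid.Adj (x, y) (x + 1, y) := by
  rw [hexGrid, SimpleGraph.fromRel_adj]
  refine ⟨?_, Or.inl (Or.inl ⟨rfl, ?_⟩)⟩
  · intro h
    have := congrArg Prod.fst h
    simp at this
  · simp

lemma adj_left (x y : ℤ) : hexGrid.Adj (x, y) (x - 1, y) := by
  rw [hexGrid, SimpleGraph.fromRel_adj]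
  refine ⟨?_, Or.inl (Or.inl ⟨rfl, ?_⟩)⟩
  · intro h
    have := congrArg Prod.fst h
    simp at this
    omega
  · simp

lemma adj_up (x y : ℤ) (h : (x + y) % 2 = 0) : hexGrid.Adj (x, y) (x, y + 1) := by
  rw [hexGrid, SimpleGraph.fromRel_adj]
  refine ⟨?_, Or.inl (Or.inr ⟨rfl, Int.even_iff.mpr h, rfl⟩)⟩
  intro hh
  have := congrArg Prod.snd hh
  simp at this

lemma adj_down (x y : ℤ) (h : (x + y) % 2 ≠ 0) : hexGrid.Adj (x, y) (x, y - 1) := by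
  rw [hexGrid, SimpleGraph.fromRel_adj]
  refine ⟨?_, Or.inr (Or.inr ⟨rfl, ?_, by ring⟩)⟩
  · intro hh
    have := congrArg Prod.snd hh
    simp at this
    omega
  · show Even (x + (y - 1))
    rw [Int.even_iff]
    omega

lemma adj_cases {p q : ℤ × ℤ} (h : hexGrid.Adj p q) :
    q = (p.1 + 1, p.2) ∨ q = (p.1 - 1, p.2) ∨
      ((p.1 + p.2) % 2 = 0 ∧ q = (p.1, p.2 + 1)) ∨
      ((p.1 + p.2) % 2 ≠ 0 ∧ q = (p.1, p.2 - 1)) := by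
  rw [hexGrid, SimpleGraph.fromRel_adj] at h
  obtain ⟨hne, h | h⟩ := h
  · rcases h with ⟨hy, hx⟩ | ⟨hx, he, hy⟩
    · rcases abs_eq (by norm_num : (0:ℤ) ≤ 1) |>.mp hx with h1 | h1
      · right; left
        rw [Prod.ext_iff]
        exact ⟨show q.1 = p.1 - 1 by omega, show q.2 = p.2 by omega⟩
      · left
        rw [Prod.ext_iff]
        exact ⟨show q.1 = p.1 + 1 by omega, show q.2 = p.2 by omega⟩
    · right; right; left
      rw [Int.even_iff] at he
      refine ⟨he, ?_⟩
      rw [Prod.ext_iff]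
      exact ⟨show q.1 = p.1 by omega, show q.2 = p.2 + 1 by omega⟩
  · rcases h with ⟨hy, hx⟩ | ⟨hx, he, hy⟩
    · rcases abs_eq (by norm_num : (0:ℤ) ≤ 1) |>.mp hx with h1 | h1
      · left
        rw [Prod.ext_iff]
        exact ⟨show q.1 = p.1 + 1 by omega, show q.2 = p.2 by omega⟩
      · right; left
        rw [Prod.ext_iff]
        exact ⟨show q.1 = p.1 - 1 by omega, show q.2 = p.2 by omega⟩
    · right; right; right
      rw [Int.even_iff] at he
      constructor
      · omega
      · rw [Prod.ext_iff]
        exact ⟨show q.1 = p.1 by omega, show q.2 = p.2 - 1 by omega⟩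


lemma reach_up (x y : ℤ) : hexGrid.Reachable (x, y) (x, y + 1) := by
  by_cases h : (x + y) % 2 = 0
  · exact (adj_up x y h).reachable
  · have h3 := adj_left (x+1) (y+1)
    rw [show (x + 1 - 1 : ℤ) = x by ring] at h3
    exact (adj_right x y).reachable.trans
      (((adj_up (x+1) y (by omega)).reachable).trans h3.reachable)

lemma reach_down (x y : ℤ) : hexGrid.Reachable (x, y) (x, y - 1) := by
  by_cases h : (x + y) % 2 = 0
  · have h3 := adj_left (x+1) (y-1)
    rw [show (x + 1 - 1 : ℤ) = x by ring] at h3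
    exact (adj_right x y).reachable.trans
      (((adj_down (x+1) y (by omega)).reachable).trans h3.reachable)
  · exact (adj_down x y h).reachable

lemma reach_vert (x y : ℤ) : ∀ k : ℤ, hexGrid.Reachable (x, y) (x, y + k) := by
  intro k
  induction k using Int.induction_on with
  | zero => rw [add_zero]
  | succ n ih =>
    refine ih.trans ?_
    have := reach_up x (y + n)
    rwa [show (y + (n:ℤ) + 1 : ℤ) = y + ((n:ℤ) + 1) by ring] at this
  | pred n ih =>
    refine ih.trans ?_
    have := reach_down x (y + (-(n:ℤ)))
    rwa [show (y + -(n:ℤ) - 1 : ℤ) = y + (-(n:ℤ) - 1) by ring] at this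

lemma reach_horiz (x y : ℤ) : ∀ k : ℤ, hexGrid.Reachable (x, y) (x + k, y) := by
  intro k
  induction k using Int.induction_on with
  | zero => rw [add_zero]
  | succ n ih =>
    refine ih.trans ?_
    have := (adj_right (x + n) y).reachable
    rwa [show (x + (n:ℤ) + 1 : ℤ) = x + ((n:ℤ) + 1) by ring] at this
  | pred n ih =>
    refine ih.trans ?_
    have := (adj_left (x + -(n:ℤ)) y).reachable
    rwa [show (x + -(n:ℤ) - 1 : ℤ) = x + (-(n:ℤ) - 1) by ring] at this

lemma hex_connected : hexGrid.Connected := by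
  rw [SimpleGraph.connected_iff]
  refine ⟨?_, ⟨(0, 0)⟩⟩
  intro p q
  obtain ⟨px, py⟩ := p
  obtain ⟨qx, qy⟩ := q
  have h1 := reach_vert px py (qy - py)
  rw [show py + (qy - py) = qy by ring] at h1
  have h2 := reach_horiz px qy (qx - px)
  rw [show px + (qx - px) = qx by ring] at h2
  exact h1.trans h2

lemma dist_adj {p q : ℤ × ℤ} (h : hexGrid.Adj p q) : hexGrid.dist p q ≤ 1 := by
  have := SimpleGraph.dist_le h.toWalk
  simpa using this

lemma dist_tri (p q r : ℤ × ℤ) :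
    hexGrid.dist p r ≤ hexGrid.dist p q + hexGrid.dist q r :=
  hex_connected.dist_triangle

lemma dist_horiz_r (x y : ℤ) (n : ℕ) : hexGrid.dist (x, y) (x + (n:ℤ), y) ≤ n := by
  induction n with
  | zero => simp [SimpleGraph.dist_self]
  | succ n ih =>
    have h2 := dist_adj (adj_right (x + (n:ℤ)) y)
    have h3 := dist_tri (x, y) (x + (n:ℤ), y) (x + (n:ℤ) + 1, y)
    push_cast
    rw [show x + ((n:ℤ) + 1) = x + (n:ℤ) + 1 by ring]
    omega

lemma dist_horiz_l (x y : ℤ) (n : ℕ) : hexGrid.dist (x, y) (x - (n:ℤ), y) ≤ n := by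
  induction n with
  | zero => simp [SimpleGraph.dist_self]
  | succ n ih =>
    have h2 := dist_adj (adj_left (x - (n:ℤ)) y)
    have h3 := dist_tri (x, y) (x - (n:ℤ), y) (x - (n:ℤ) - 1, y)
    push_cast
    rw [show x - ((n:ℤ) + 1) = x - (n:ℤ) - 1 by ring]
    omega

lemma step_NE (x y : ℤ) : hexGrid.dist (x, y) (x + 1, y + 1) ≤ 2 := by
  by_cases h : (x + y) % 2 = 0
  · have h1 := dist_adj (adj_up x y h)
    have h2 := dist_adj (adj_right x (y + 1))
    have h3 := dist_tri (x, y) (x, y + 1) (x + 1, y + 1)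
    omega
  · have h1 := dist_adj (adj_right x y)
    have h2 := dist_adj (adj_up (x + 1) y (by omega))
    have h3 := dist_tri (x, y) (x + 1, y) (x + 1, y + 1)
    omega

lemma step_SE (x y : ℤ) : hexGrid.dist (x, y) (x + 1, y - 1) ≤ 2 := by
  by_cases h : (x + y) % 2 = 0
  · have h1 := dist_adj (adj_right x y)
    have h2 := dist_adj (adj_down (x + 1) y (by omega))
    have h3 := dist_tri (x, y) (x + 1, y) (x + 1, y - 1)
    omega
  · have h1 := dist_adj (adj_down x y h)
    have h2 := dist_adj (adj_right x (y - 1))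
    have h3 := dist_tri (x, y) (x, y - 1) (x + 1, y - 1)
    omega

lemma dist_NE (x y : ℤ) (n : ℕ) :
    hexGrid.dist (x, y) (x + (n:ℤ), y + (n:ℤ)) ≤ 2 * n := by
  induction n with
  | zero => simp [SimpleGraph.dist_self]
  | succ n ih =>
    have h2 := step_NE (x + (n:ℤ)) (y + (n:ℤ))
    have h3 := dist_tri (x, y) (x + (n:ℤ), y + (n:ℤ)) (x + (n:ℤ) + 1, y + (n:ℤ) + 1)
    push_cast
    rw [show x + ((n:ℤ) + 1) = x + (n:ℤ) + 1 by ring,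
      show y + ((n:ℤ) + 1) = y + (n:ℤ) + 1 by ring]
    omega

lemma dist_SE (x y : ℤ) (n : ℕ) :
    hexGrid.dist (x, y) (x + (n:ℤ), y - (n:ℤ)) ≤ 2 * n := by
  induction n with
  | zero => simp [SimpleGraph.dist_self]
  | succ n ih =>
    have h2 := step_SE (x + (n:ℤ)) (y - (n:ℤ))
    have h3 := dist_tri (x, y) (x + (n:ℤ), y - (n:ℤ)) (x + (n:ℤ) + 1, y - (n:ℤ) - 1)
    push_cast
    rw [show x + ((n:ℤ) + 1) = x + (n:ℤ) + 1 by ring,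
      show y - ((n:ℤ) + 1) = y - (n:ℤ) - 1 by ring]
    omega

/-- The `g`-potential: `2y` plus a parity correction. Changes by exactly `±1` on edges. -/
def gg (p : ℤ × ℤ) : ℤ := 2 * p.2 + 1 - (p.1 + p.2) % 2

lemma adj_gg {p q : ℤ × ℤ} (h : hexGrid.Adj p q) :
    gg p - gg q ≤ 1 ∧ gg q - gg p ≤ 1 := by
  rcases adj_cases h with rfl | rfl | ⟨he, rfl⟩ | ⟨he, rfl⟩ <;>
    · simp only [gg]
      omega

lemma adj_sig {p q : ℤ × ℤ} (h : hexGrid.Adj p q) :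
    (p.1 + p.2) - (q.1 + q.2) ≤ 1 ∧ (q.1 + q.2) - (p.1 + p.2) ≤ 1 := by
  rcases adj_cases h with rfl | rfl | ⟨he, rfl⟩ | ⟨he, rfl⟩ <;>
    · simp only
      omega

lemma adj_del {p q : ℤ × ℤ} (h : hexGrid.Adj p q) :
    (p.1 - p.2) - (q.1 - q.2) ≤ 1 ∧ (q.1 - q.2) - (p.1 - p.2) ≤ 1 := by
  rcases adj_cases h with rfl | rfl | ⟨he, rfl⟩ | ⟨he, rfl⟩ <;>
    · simp only
      omega

lemma adj_coord {p q : ℤ × ℤ} (h : hexGrid.Adj p q) :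
    p.1 - q.1 ≤ 1 ∧ q.1 - p.1 ≤ 1 ∧ p.2 - q.2 ≤ 1 ∧ q.2 - p.2 ≤ 1 := by
  rcases adj_cases h with rfl | rfl | ⟨he, rfl⟩ | ⟨he, rfl⟩ <;>
    · simp only
      omega

lemma walk_hom {f : ℤ × ℤ → ℤ}
    (hf : ∀ p q : ℤ × ℤ, hexGrid.Adj p q → f p - f q ≤ 1 ∧ f q - f p ≤ 1) :
    ∀ {p q : ℤ × ℤ} (w : hexGrid.Walk p q),
      f p - f q ≤ (w.length : ℤ) ∧ f q - f p ≤ (w.length : ℤ) := by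
  intro p q w
  induction w with
  | nil => simp
  | @cons a b c hab w ih =>
    obtain ⟨h1, h2⟩ := hf a b hab
    obtain ⟨h3, h4⟩ := ih
    simp only [SimpleGraph.Walk.length_cons]
    push_cast
    omega

lemma hom_le_dist {f : ℤ × ℤ → ℤ}
    (hf : ∀ p q : ℤ × ℤ, hexGrid.Adj p q → f p - f q ≤ 1 ∧ f q - f p ≤ 1)
    (p q : ℤ × ℤ) :
    f p - f q ≤ (hexGrid.dist p q : ℤ) ∧ f q - f p ≤ (hexGrid.dist p q : ℤ) := by
  obtain ⟨w, hw⟩ := (hex_connected p q).exists_walk_length_eq_dist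
  have := walk_hom hf w
  rwa [hw] at this

lemma sig_le_dist (p q : ℤ × ℤ) :
    (p.1 + p.2) - (q.1 + q.2) ≤ (hexGrid.dist p q : ℤ) ∧
      (q.1 + q.2) - (p.1 + p.2) ≤ (hexGrid.dist p q : ℤ) :=
  hom_le_dist (f := fun p => p.1 + p.2) (fun _ _ h => adj_sig h) p q

lemma del_le_dist (p q : ℤ × ℤ) :
    (p.1 - p.2) - (q.1 - q.2) ≤ (hexGrid.dist p q : ℤ) ∧
      (q.1 - q.2) - (p.1 - p.2) ≤ (hexGrid.dist p q : ℤ) :=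
  hom_le_dist (f := fun p => p.1 - p.2) (fun _ _ h => adj_del h) p q

lemma gg_le_dist (p q : ℤ × ℤ) :
    gg p - gg q ≤ (hexGrid.dist p q : ℤ) ∧ gg q - gg p ≤ (hexGrid.dist p q : ℤ) :=
  hom_le_dist (f := gg) (fun _ _ h => adj_gg h) p q

lemma exists_closer (v w : ℤ × ℤ) (h : hexGrid.dist v w ≠ 0) :
    ∃ v' : ℤ × ℤ, hexGrid.Adj v v' ∧ hexGrid.dist v' w + 1 = hexGrid.dist v w := by
  obtain ⟨p, hp⟩ := (hex_connected v w).exists_walk_length_eq_dist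
  cases p with
  | nil =>
    rw [← hp] at h
    simp at h
  | @cons a b c hab q =>
    refine ⟨b, hab, ?_⟩
    have hq : hexGrid.dist b w ≤ q.length := SimpleGraph.dist_le q
    have hlen : q.length + 1 = hexGrid.dist v w := by
      rw [← hp]; simp [SimpleGraph.Walk.length_cons]
    have h1 := dist_adj hab
    have htri := dist_tri v b w
    omega


/-! ### burnt set lemmas -/

lemma burnt_mono_succ (G : SimpleGraph V) (F : Set V) (prot : ℕ → Set V) (t : ℕ) :
    burnt G F prot t ⊆ burnt G F prot (t + 1) :=
  Set.subset_union_left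

lemma burnt_box (u : ℤ × ℤ) (prot : ℕ → Set (ℤ × ℤ)) :
    ∀ t, ∀ v ∈ burnt hexGrid {u} prot t,
      v.1 - u.1 ≤ (t:ℤ) ∧ u.1 - v.1 ≤ (t:ℤ) ∧ v.2 - u.2 ≤ (t:ℤ) ∧ u.2 - v.2 ≤ (t:ℤ) := by
  intro t
  induction t with
  | zero =>
    intro v hv
    have : v = u := hv
    subst this
    simp
  | succ t ih =>
    intro v hv
    rcases hv with hv | ⟨-, x, hx, hadj⟩
    · have := ih v hv
      push_cast
      omega
    · have h1 := ih x hx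
      have h2 := adj_coord hadj
      push_cast
      omega

/-! ### the fire chases any unburnt target -/

lemma fire_reaches {k : ℕ} (u w : ℤ × ℤ) (T : ℕ) (pos : ℕ → Fin k → ℤ × ℤ)
    (hmove : ∀ t i, ReachWithin hexGrid (burnt hexGrid {u} (protOf pos) (t + 1))ᶜ 1
      (pos t i) (pos (t + 1) i))
    (hcont : ∀ t, burnt hexGrid {u} (protOf pos) t ⊆ burnt hexGrid {u} (protOf pos) T)
    (hw : w ∉ burnt hexGrid {u} (protOf pos) T) :
    ∃ i, hexGrid.dist (pos 0 i) w < hexGrid.dist u w := by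
  have hspeed : ∀ i s, hexGrid.dist (pos 0 i) (pos s i) ≤ s := by
    intro i s
    induction s with
    | zero => simp [SimpleGraph.dist_self]
    | succ s ih =>
      obtain ⟨p, hlen, -⟩ := hmove s i
      have h1 : hexGrid.dist (pos s i) (pos (s + 1) i) ≤ 1 :=
        le_trans (SimpleGraph.dist_le p) hlen
      have h3 := dist_tri (pos 0 i) (pos s i) (pos (s + 1) i)
      omega
  have hwburn : ∀ t, w ∉ burnt hexGrid {u} (protOf pos) t := fun t ht => hw (hcont t ht)
  have main : ∀ t, (∃ i, hexGrid.dist (pos 0 i) w < hexGrid.dist u w) ∨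
      ∃ v ∈ burnt hexGrid {u} (protOf pos) t, hexGrid.dist v w + t ≤ hexGrid.dist u w := by
    intro t
    induction t with
    | zero => exact Or.inr ⟨u, rfl, by simp⟩
    | succ t ih =>
      rcases ih with h | ⟨v, hv, hle⟩
      · exact Or.inl h
      by_cases hv2 : hexGrid.dist v w + (t + 1) ≤ hexGrid.dist u w
      · exact Or.inr ⟨v, burnt_mono_succ _ _ _ _ hv, hv2⟩
      have heq : hexGrid.dist v w + t = hexGrid.dist u w := by omega
      have hne0 : hexGrid.dist v w ≠ 0 := by
        intro h0
        have hvw : v = w := (hex_connected.dist_eq_zero_iff).mp h0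
        subst hvw
        exact hwburn t hv
      obtain ⟨v', hadj, hd⟩ := exists_closer v w hne0
      by_cases hpr : v' ∈ protOf pos t
      · obtain ⟨s, hs, i, hpos⟩ := hpr
        left
        refine ⟨i, ?_⟩
        have t1 := dist_tri (pos 0 i) (pos s i) w
        have hsp := hspeed i s
        rw [hpos] at t1 hsp
        omega
      · exact Or.inr ⟨v', Or.inr ⟨hpr, v, hv, hadj⟩, by omega⟩
  rcases main (hexGrid.dist u w) with h | ⟨v, hv, hle⟩
  · exact h
  · exfalso
    have h0 : hexGrid.dist v w = 0 := by omega
    have hvw : v = w := (hex_connected.dist_eq_zero_iff).mp h0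
    subst hvw
    exact hwburn _ hv

/-! ### choosing an escape target -/

lemma pick_target (u a b : ℤ × ℤ) (T : ℕ) :
    ∃ w : ℤ × ℤ,
      ¬(w.1 - u.1 ≤ (T:ℤ) ∧ u.1 - w.1 ≤ (T:ℤ) ∧ w.2 - u.2 ≤ (T:ℤ) ∧ u.2 - w.2 ≤ (T:ℤ)) ∧
      hexGrid.dist u w ≤ hexGrid.dist a w ∧ hexGrid.dist u w ≤ hexGrid.dist b w := by
  set n : ℕ := T + 1 with hn
  -- the four candidate targets
  set wE : ℤ × ℤ := (u.1 + (n:ℤ), u.2) with hwE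
  set wW : ℤ × ℤ := (u.1 - (n:ℤ), u.2) with hwW
  set wNE : ℤ × ℤ := (u.1 + (n:ℤ), u.2 + (n:ℤ)) with hwNE
  set wSE : ℤ × ℤ := (u.1 + (n:ℤ), u.2 - (n:ℤ)) with hwSE
  have hwE1 : wE.1 = u.1 + (n:ℤ) := by rw [hwE]
  have hwE2 : wE.2 = u.2 := by rw [hwE]
  have hwW1 : wW.1 = u.1 - (n:ℤ) := by rw [hwW]
  have hwW2 : wW.2 = u.2 := by rw [hwW]
  have hwNE1 : wNE.1 = u.1 + (n:ℤ) := by rw [hwNE]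
  have hwNE2 : wNE.2 = u.2 + (n:ℤ) := by rw [hwNE]
  have hwSE1 : wSE.1 = u.1 + (n:ℤ) := by rw [hwSE]
  have hwSE2 : wSE.2 = u.2 - (n:ℤ) := by rw [hwSE]
  have hgNE : gg wNE = gg u + 2 * (n:ℤ) := by
    simp only [gg, hwNE]
    omega
  have hgSE : gg wSE = gg u - 2 * (n:ℤ) := by
    simp only [gg, hwSE]
    omega
  have hdE : hexGrid.dist u wE ≤ n := by
    rw [hwE, show u = (u.1, u.2) from rfl]
    exact dist_horiz_r u.1 u.2 n
  have hdW : hexGrid.dist u wW ≤ n := by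
    rw [hwW, show u = (u.1, u.2) from rfl]
    exact dist_horiz_l u.1 u.2 n
  have hdNE : hexGrid.dist u wNE ≤ 2 * n := by
    rw [hwNE, show u = (u.1, u.2) from rfl]
    exact dist_NE u.1 u.2 n
  have hdSE : hexGrid.dist u wSE ≤ 2 * n := by
    rw [hwSE, show u = (u.1, u.2) from rfl]
    exact dist_SE u.1 u.2 n
  -- "beats" lemmas
  have hE : ∀ p : ℤ × ℤ, (p.1 + p.2 ≤ u.1 + u.2 ∨ p.1 - p.2 ≤ u.1 - u.2) →
      hexGrid.dist u wE ≤ hexGrid.dist p wE := by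
    intro p hp
    rcases hp with hp | hp
    · have h1 := (sig_le_dist p wE).2
      omega
    · have h1 := (del_le_dist p wE).2
      omega
  have hW : ∀ p : ℤ × ℤ, (u.1 + u.2 ≤ p.1 + p.2 ∨ u.1 - u.2 ≤ p.1 - p.2) →
      hexGrid.dist u wW ≤ hexGrid.dist p wW := by
    intro p hp
    rcases hp with hp | hp
    · have h1 := (sig_le_dist p wW).1
      omega
    · have h1 := (del_le_dist p wW).1
      omega
  have hNE : ∀ p : ℤ × ℤ, (gg p ≤ gg u ∨ p.1 + p.2 ≤ u.1 + u.2) →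
      hexGrid.dist u wNE ≤ hexGrid.dist p wNE := by
    intro p hp
    rcases hp with hp | hp
    · have h1 := (gg_le_dist p wNE).2
      omega
    · have h1 := (sig_le_dist p wNE).2
      omega
  have hSE : ∀ p : ℤ × ℤ, (gg u ≤ gg p ∨ p.1 - p.2 ≤ u.1 - u.2) →
      hexGrid.dist u wSE ≤ hexGrid.dist p wSE := by
    intro p hp
    rcases hp with hp | hp
    · have h1 := (gg_le_dist p wSE).1
      omega
    · have h1 := (del_le_dist p wSE).2
      omega
  -- box escape
  have hboxE : ¬(wE.1 - u.1 ≤ (T:ℤ) ∧ u.1 - wE.1 ≤ (T:ℤ) ∧ wE.2 - u.2 ≤ (T:ℤ) ∧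
      u.2 - wE.2 ≤ (T:ℤ)) := by
    omega
  have hboxW : ¬(wW.1 - u.1 ≤ (T:ℤ) ∧ u.1 - wW.1 ≤ (T:ℤ) ∧ wW.2 - u.2 ≤ (T:ℤ) ∧
      u.2 - wW.2 ≤ (T:ℤ)) := by
    omega
  have hboxNE : ¬(wNE.1 - u.1 ≤ (T:ℤ) ∧ u.1 - wNE.1 ≤ (T:ℤ) ∧ wNE.2 - u.2 ≤ (T:ℤ) ∧
      u.2 - wNE.2 ≤ (T:ℤ)) := by
    omega
  have hboxSE : ¬(wSE.1 - u.1 ≤ (T:ℤ) ∧ u.1 - wSE.1 ≤ (T:ℤ) ∧ wSE.2 - u.2 ≤ (T:ℤ) ∧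
      u.2 - wSE.2 ≤ (T:ℤ)) := by
    omega
  -- decision tree
  by_cases hSa : a.1 + a.2 ≤ u.1 + u.2
  · by_cases hSb : b.1 + b.2 ≤ u.1 + u.2
    · exact ⟨wE, hboxE, hE a (Or.inl hSa), hE b (Or.inl hSb)⟩
    · push_neg at hSb
      by_cases hDa : u.1 - u.2 ≤ a.1 - a.2
      · exact ⟨wW, hboxW, hW a (Or.inr hDa), hW b (Or.inl hSb.le)⟩
      · push_neg at hDa
        by_cases hGb : gg u ≤ gg b
        · exact ⟨wSE, hboxSE, hSE a (Or.inr hDa.le), hSE b (Or.inl hGb)⟩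
        · push_neg at hGb
          exact ⟨wNE, hboxNE, hNE a (Or.inr hSa), hNE b (Or.inl hGb.le)⟩
  · push_neg at hSa
    by_cases hSb : u.1 + u.2 ≤ b.1 + b.2
    · exact ⟨wW, hboxW, hW a (Or.inl hSa.le), hW b (Or.inl hSb)⟩
    · push_neg at hSb
      by_cases hDb : u.1 - u.2 ≤ b.1 - b.2
      · exact ⟨wW, hboxW, hW a (Or.inl hSa.le), hW b (Or.inr hDb)⟩
      · push_neg at hDb
        by_cases hGa : gg u ≤ gg a
        · exact ⟨wSE, hboxSE, hSE a (Or.inl hGa), hSE b (Or.inr hDb.le)⟩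
        · push_neg at hGa
          exact ⟨wNE, hboxNE, hNE a (Or.inl hGa.le), hNE b (Or.inr hSb.le)⟩


/-! ### three firefighters suffice -/

/-- The three neighbours of a vertex of the hexagonal grid. -/
def hexNbr (u : ℤ × ℤ) : Fin 3 → ℤ × ℤ := fun i =>
  if i.val = 0 then (u.1 + 1, u.2)
  else if i.val = 1 then (u.1 - 1, u.2)
  else if (u.1 + u.2) % 2 = 0 then (u.1, u.2 + 1) else (u.1, u.2 - 1)

lemma hexNbr_ne (u : ℤ × ℤ) (i : Fin 3) : hexNbr u i ≠ u := by
  unfold hexNbr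
  split_ifs <;>
    · intro h
      rw [Prod.ext_iff] at h
      simp only at h
      omega

lemma hexNbr_covers (u v : ℤ × ℤ) (h : hexGrid.Adj u v) : ∃ i : Fin 3, hexNbr u i = v := by
  rcases adj_cases h with rfl | rfl | ⟨he, rfl⟩ | ⟨he, rfl⟩
  · exact ⟨⟨0, by norm_num⟩, rfl⟩
  · refine ⟨⟨1, by norm_num⟩, ?_⟩
    simp [hexNbr]
  · refine ⟨⟨2, by norm_num⟩, ?_⟩
    have he' : (2:ℤ) ∣ (u.1 + u.2) := by omega
    simp [hexNbr, he']
  · refine ⟨⟨2, by norm_num⟩, ?_⟩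
    have he' : ¬((2:ℤ) ∣ (u.1 + u.2)) := by omega
    simp [hexNbr, he']

lemma canContain3 (u : ℤ × ℤ) : CanContainIn hexGrid 1 3 {u} 0 := by
  have hburn : ∀ t, burnt hexGrid {u} (protOf fun _ i => hexNbr u i) t = {u} := by
    intro t
    induction t with
    | zero => rfl
    | succ t ih =>
      apply Set.Subset.antisymm
      · intro v hv
        rcases hv with hv | ⟨hnp, x, hx, hadj⟩
        · rwa [ih] at hv
        · exfalso
          apply hnp
          rw [ih] at hx
          rw [show x = u from hx] at hadj
          obtain ⟨i, hi⟩ := hexNbr_covers u v hadj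
          exact ⟨0, Nat.zero_le _, i, hi⟩
      · intro v hv
        left
        rw [ih]
        exact hv
  refine ⟨fun _ i => hexNbr u i, ?_, ?_, ?_⟩
  · intro i hi
    exact hexNbr_ne u i hi
  · intro t i
    refine ⟨SimpleGraph.Walk.nil, by simp, ?_⟩
    intro x hx
    simp only [SimpleGraph.Walk.support_nil, List.mem_singleton] at hx
    subst hx
    intro hmem
    rw [hburn] at hmem
    exact hexNbr_ne u i hmem
  · intro t
    rw [hburn t]
    intro v hv
    rw [hburn 0]
    exact hv

lemma not_canContain (u : ℤ × ℤ) (k : ℕ) (hk : k ≤ 2) : ¬CanContain hexGrid 1 k {u} := by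
  rintro ⟨T, pos, hinit, hmove, hcont⟩
  classical
  set a : ℤ × ℤ := if h : 0 < k then pos 0 ⟨0, h⟩ else u with ha
  set b : ℤ × ℤ := if h : 1 < k then pos 0 ⟨1, h⟩ else a with hb
  obtain ⟨w, hbox, hda, hdb⟩ := pick_target u a b T
  have hw : w ∉ burnt hexGrid {u} (protOf pos) T := by
    intro hmem
    exact hbox (burnt_box u (protOf pos) T w hmem)
  obtain ⟨i, hlt⟩ := fire_reaches u w T pos hmove hcont hw
  have hcov : pos 0 i = a ∨ pos 0 i = b := by
    have hik : (i : ℕ) < k := i.isLt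
    by_cases h0 : (i : ℕ) = 0
    · left
      rw [ha, dif_pos (show 0 < k by omega)]
      congr 1
      exact Fin.ext (by simp [h0])
    · right
      have h1 : (i : ℕ) = 1 := by omega
      rw [hb, dif_pos (show 1 < k by omega)]
      congr 1
      exact Fin.ext (by simp [h1])
  rcases hcov with hc | hc <;> rw [hc] at hlt <;> omega


/-- In the distance-restricted game with `d = 1` on the infinite hexagonal grid, three
firefighters are necessary and sufficient: `f_1(G_hex) = 3`. -/
theorem hex_grid_d1 :
    ∀ u : ℤ × ℤ, fdNum hexGrid 1 u = 3 := by
  intro u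
  have h3 : CanContain hexGrid 1 3 {u} := ⟨0, canContain3 u⟩
  refine le_antisymm (Nat.sInf_le h3) ?_
  refine le_csInf ⟨3, h3⟩ ?_
  intro k hk
  by_contra h
  push_neg at h
  exact not_canContain u k (by omega) hk

end Firefight
end

section
/- For every integer d ≥ 1, in the distance-restricted firefighter game with parameter d on the two-way infinite path (vertex set ℤ with i adjacent to i+1), two firefighters can contain a fire starting at any vertex, but one firefighter cannot; that is, f_d equals 2 for the two-way infinite path for every d. -/
/- Distance-restricted firefighter game (Burgess, Marcoux, Pike, arXiv:2204.01908).

At time 0 a fire breaks out at the set `F` of vertices and each firefighter is placed on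
(protects) a vertex not in `F`.  At each subsequent time step the fire spreads to every
unburnt, unprotected neighbour of a burning vertex, and then each firefighter moves to a
vertex at distance at most `d` from its current vertex in the subgraph induced by the
unburnt vertices (i.e. along a walk of length ≤ `d` through unburnt vertices).
Occupied vertices are protected forever.  The fire is contained if the burnt set
stabilizes after finitely many steps. -/

namespace Firefight

variable {V : Type*}

/-- The two-way infinite path: vertex set `ℤ` with `i` adjacent to `i+1`. -/
def intPath : SimpleGraph ℤ :=
  SimpleGraph.fromRel (fun i j => j = i + 1)


lemma intPath_adj {a b : ℤ} : intPath.Adj a b ↔ a ≠ b ∧ (b = a + 1 ∨ a = b + 1) := by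
  simp [intPath, SimpleGraph.fromRel_adj]

lemma burnt_succ (G : SimpleGraph V) (F : Set V) (prot : ℕ → Set V) (t : ℕ) :
    burnt G F prot (t + 1) =
      burnt G F prot t ∪ {v | v ∉ prot t ∧ ∃ w ∈ burnt G F prot t, G.Adj w v} := rfl

lemma burnt_mono_s12 {G : SimpleGraph V} {F : Set V} {prot : ℕ → Set V} {s t : ℕ}
    (h : s ≤ t) : burnt G F prot s ⊆ burnt G F prot t := by
  induction t with
  | zero => simp [Nat.le_zero.mp h]
  | succ t ih =>
    rcases Nat.lt_or_ge s (t + 1) with h' | h'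
    · exact (ih (Nat.lt_succ_iff.mp h')).trans (by rw [burnt_succ]; exact Set.subset_union_left)
    · have hst : s = t + 1 := le_antisymm h h'
      subst hst; exact subset_rfl

lemma walk_gt {u : ℤ} {a b : ℤ} (p : intPath.Walk a b)
    (hs : ∀ x ∈ p.support, x ≠ u) (ha : u < a) : u < b := by
  induction p with
  | nil => exact ha
  | @cons a c b hadj q ih =>
    have hc : c ≠ u := hs c (by simp)
    obtain ⟨hne, h1 | h1⟩ := intPath_adj.mp hadj <;>
      exact ih (fun x hx => hs x (by simp [hx])) (by omega)

lemma walk_lt {u : ℤ} {a b : ℤ} (p : intPath.Walk a b)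
    (hs : ∀ x ∈ p.support, x ≠ u) (ha : a < u) : b < u := by
  induction p with
  | nil => exact ha
  | @cons a c b hadj q ih =>
    have hc : c ≠ u := hs c (by simp)
    obtain ⟨hne, h1 | h1⟩ := intPath_adj.mp hadj <;>
      exact ih (fun x hx => hs x (by simp [hx])) (by omega)

lemma burnt_Icc (u : ℤ) (prot : ℕ → Set ℤ) :
    ∀ t : ℕ, burnt intPath {u} prot t ⊆ Set.Icc (u - t) (u + t) := by
  intro t
  induction t with
  | zero => intro v hv; simp only [burnt, Set.mem_singleton_iff] at hv; subst hv; simp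
  | succ t ih =>
    intro v hv
    rw [burnt_succ] at hv
    rcases hv with h | ⟨_, w, hw, hadj⟩
    · have := ih h
      simp only [Set.mem_Icc] at this ⊢
      push_cast at this ⊢; omega
    · have := ih hw
      obtain ⟨_, h1 | h1⟩ := intPath_adj.mp hadj <;>
        · simp only [Set.mem_Icc] at this ⊢
          push_cast at this ⊢; omega

lemma left_burns (u : ℤ) (prot : ℕ → Set ℤ) (h : ∀ t : ℕ, (u - (t + 1) : ℤ) ∉ prot t) :
    ∀ t : ℕ, (u - t : ℤ) ∈ burnt intPath {u} prot t := by
  intro t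
  induction t with
  | zero => simp [burnt]
  | succ t ih =>
    rw [burnt_succ]
    refine Set.mem_union_right _ ⟨by push_cast; exact h t, u - t, ih, ?_⟩
    rw [intPath_adj]
    push_cast
    exact ⟨by omega, Or.inr (by omega)⟩

lemma right_burns (u : ℤ) (prot : ℕ → Set ℤ) (h : ∀ t : ℕ, (u + (t + 1) : ℤ) ∉ prot t) :
    ∀ t : ℕ, (u + t : ℤ) ∈ burnt intPath {u} prot t := by
  intro t
  induction t with
  | zero => simp [burnt]
  | succ t ih =>
    rw [burnt_succ]
    refine Set.mem_union_right _ ⟨by push_cast; exact h t, u + t, ih, ?_⟩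
    rw [intPath_adj]
    push_cast
    exact ⟨by omega, Or.inl (by omega)⟩

lemma no_contain (u : ℤ) (prot : ℕ → Set ℤ)
    (h : (∀ t : ℕ, (u - (t + 1) : ℤ) ∉ prot t) ∨ (∀ t : ℕ, (u + (t + 1) : ℤ) ∉ prot t))
    (T : ℕ) (hc : ∀ t, burnt intPath {u} prot t ⊆ burnt intPath {u} prot T) : False := by
  rcases h with h | h
  · have h1 := left_burns u prot h (T + 1)
    have h2 := burnt_Icc u prot T (hc _ h1)
    simp only [Set.mem_Icc] at h2
    push_cast at h2; omega
  · have h1 := right_burns u prot h (T + 1)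
    have h2 := burnt_Icc u prot T (hc _ h1)
    simp only [Set.mem_Icc] at h2
    push_cast at h2; omega

lemma two_contain (d : ℕ) (u : ℤ) : CanContain intPath d 2 {u} := by
  classical
  set pos : ℕ → Fin 2 → ℤ := fun _ i => if i = 0 then u + 1 else u - 1 with hpos
  have hmem1 : ∀ t, (u + 1) ∈ protOf pos t := fun t => ⟨0, Nat.zero_le t, 0, by simp [hpos]⟩
  have hmem2 : ∀ t, (u - 1) ∈ protOf pos t :=
    fun t => ⟨0, Nat.zero_le t, 1, by simp [hpos]⟩
  have hburnt : ∀ t, burnt intPath {u} (protOf pos) t = {u} := by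
    intro t
    induction t with
    | zero => rfl
    | succ t ih =>
      rw [burnt_succ, ih]
      ext v
      simp only [Set.mem_union, Set.mem_setOf_eq, Set.mem_singleton_iff]
      constructor
      · rintro (h | ⟨hv, w, hw, hadj⟩)
        · exact h
        · exfalso
          obtain ⟨hne, h1 | h1⟩ := intPath_adj.mp hadj
          · have hveq : v = u + 1 := by omega
            exact hv (hveq ▸ hmem1 t)
          · have hveq : v = u - 1 := by omega
            exact hv (hveq ▸ hmem2 t)
      · rintro h; exact Or.inl h
  refine ⟨0, pos, ?_, ?_, ?_⟩
  · intro i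
    simp only [hpos, Set.mem_singleton_iff]
    split <;> omega
  · intro t i
    refine ⟨SimpleGraph.Walk.nil, Nat.zero_le d, ?_⟩
    intro x hx
    simp only [SimpleGraph.Walk.support_nil, List.mem_singleton] at hx
    subst hx
    rw [Set.mem_compl_iff, hburnt]
    simp only [hpos, Set.mem_singleton_iff]
    split <;> omega
  · intro t
    rw [hburnt, hburnt]

lemma one_not_contain (d : ℕ) (u : ℤ) : ¬ CanContain intPath d 1 {u} := by
  rintro ⟨T, pos, h0, hreach, hcont⟩
  have hu : ∀ t, u ∈ burnt intPath {u} (protOf pos) t :=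
    fun t => burnt_mono_s12 (Nat.zero_le t) rfl
  have h00 : pos 0 0 ≠ u := fun h => h0 0 (h ▸ rfl)
  apply no_contain u (protOf pos) _ T hcont
  rcases lt_or_gt_of_ne h00 with hlt | hgt
  · -- firefighter stays below u; right side burns
    have hall : ∀ s, pos s 0 < u := by
      intro s
      induction s with
      | zero => exact hlt
      | succ s ih =>
        obtain ⟨p, _, hsupp⟩ := hreach s 0
        exact walk_lt p (fun x hx hxe => (hsupp x hx) (hxe ▸ hu (s + 1))) ih
    right
    rintro t ⟨s, _, i, hi⟩
    have : i = 0 := Subsingleton.elim i 0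
    subst this
    have := hall s
    omega
  · have hall : ∀ s, u < pos s 0 := by
      intro s
      induction s with
      | zero => exact hgt
      | succ s ih =>
        obtain ⟨p, _, hsupp⟩ := hreach s 0
        exact walk_gt p (fun x hx hxe => (hsupp x hx) (hxe ▸ hu (s + 1))) ih
    left
    rintro t ⟨s, _, i, hi⟩
    have : i = 0 := Subsingleton.elim i 0
    subst this
    have := hall s
    omega

lemma zero_not_contain (d : ℕ) (u : ℤ) : ¬ CanContain intPath d 0 {u} := by
  rintro ⟨T, pos, h0, hreach, hcont⟩
  apply no_contain u (protOf pos) (Or.inl ?_) T hcont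
  rintro t ⟨s, _, i, hi⟩
  exact i.elim0

/-- For every integer `d ≥ 1`, on the two-way infinite path two firefighters can contain a
fire starting at any vertex, but one firefighter cannot: `f_d = 2` for every `d`. -/
theorem two_way_path_fd :
    ∀ d : ℕ, 1 ≤ d → ∀ u : ℤ,
      CanContain intPath d 2 {u} ∧ ¬ CanContain intPath d 1 {u} ∧
      fdNum intPath d u = 2 := by
  intro d hd u
  refine ⟨two_contain d u, one_not_contain d u, ?_⟩
  have h2 : 2 ∈ {k | CanContain intPath d k {u}} := two_contain d u
  have hne : {k | CanContain intPath d k {u}}.Nonempty := ⟨2, h2⟩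
  have hle : sInf {k | CanContain intPath d k {u}} ≤ 2 := Nat.sInf_le h2
  have hmem := Nat.sInf_mem hne
  have h0 : sInf {k | CanContain intPath d k {u}} ≠ 0 :=
    fun h => zero_not_contain d u (h ▸ hmem)
  have h1 : sInf {k | CanContain intPath d k {u}} ≠ 1 :=
    fun h => one_not_contain d u (h ▸ hmem)
  show sInf {k | CanContain intPath d k {u}} = 2
  omega

end Firefight
end
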